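/- arXiv:2512.22504 — 3 statements merged into one kernel-verified Lean document; each statement's English description precedes it below -/
import Mathlib

section
/- Under the Beta-Binomial model-size prior with Beta(1,b) hyperprior, i.e. P_p(k) = C(p,k) B(1+k, b+p-k)/B(1,b) for a fixed b > 0, the ratio P_p(k+1)/P_p(k) converges to 1 as p → ∞, for each fixed integer k ≥ 0. -/
open Filter

/-- The Beta function B(a,b) = Γ(a)Γ(b)/Γ(a+b). -/
noncomputable def betaFn (a b : ℝ) : ℝ := Real.Gamma a * Real.Gamma b / Real.Gamma (a + b)

/-- Under a Beta(1,b) hyperprior with fixed b, the model-size ratio tends to 1. -/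
theorem stmt6 (b : ℝ) (hb : 0 < b) (k : ℕ) :
    Tendsto (fun p : ℕ =>
        ((p.choose (k + 1) : ℝ) * betaFn (1 + ((k : ℝ) + 1)) (b + (p : ℝ) - ((k : ℝ) + 1)) /
            betaFn 1 b) /
        ((p.choose k : ℝ) * betaFn (1 + (k : ℝ)) (b + (p : ℝ) - (k : ℝ)) / betaFn 1 b))
      atTop (nhds 1) := by
  set c : ℝ := b - k - 1 with hc
  -- limit of the simplified ratio
  have hreal : Tendsto (fun x : ℝ => (x - k) / (x + c)) atTop (nhds 1) := by
    have h0 : Tendsto (fun x : ℝ => (1 - (k : ℝ) * x⁻¹) / (1 + c * x⁻¹)) atTop (nhds 1) := by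
      have hinv := tendsto_inv_atTop_zero (𝕜 := ℝ)
      have hnum : Tendsto (fun x : ℝ => 1 - (k : ℝ) * x⁻¹) atTop (nhds 1) := by
        have := (tendsto_const_nhds (x := (k:ℝ))).mul hinv
        simpa using (tendsto_const_nhds (x := (1:ℝ))).sub this
      have hden : Tendsto (fun x : ℝ => 1 + c * x⁻¹) atTop (nhds 1) := by
        have := (tendsto_const_nhds (x := c)).mul hinv
        simpa using (tendsto_const_nhds (x := (1:ℝ))).add this
      have := hnum.div hden one_ne_zero
      rw [div_one] at this
      exact this
    refine h0.congr' ?_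
    filter_upwards [eventually_gt_atTop (max 0 (-c))] with x hx
    have hx0 : (0:ℝ) < x := lt_of_le_of_lt (le_max_left _ _) hx
    have hxc : (0:ℝ) < x + c := by
      have := lt_of_le_of_lt (le_max_right _ _) hx
      linarith
    field_simp
  have hlim : Tendsto (fun p : ℕ => ((p : ℝ) - k) / ((p : ℝ) + c)) atTop (nhds 1) :=
    hreal.comp tendsto_natCast_atTop_atTop
  refine hlim.congr' ?_
  filter_upwards [eventually_ge_atTop (k + 1)] with p hp
  have hkp : k ≤ p := le_trans (Nat.le_succ k) hp
  have hx : (0:ℝ) < b + (p : ℝ) - k - 1 := by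
    have : (k : ℝ) + 1 ≤ (p : ℝ) := by exact_mod_cast hp
    linarith
  set x : ℝ := b + (p : ℝ) - k - 1 with hxdef
  have hΓx : Real.Gamma x ≠ 0 := (Real.Gamma_pos_of_pos hx).ne'
  have hΓk : Real.Gamma ((k : ℝ) + 1) ≠ 0 :=
    (Real.Gamma_pos_of_pos (by positivity)).ne'
  have hΓs : Real.Gamma (b + (p : ℝ) + 1) ≠ 0 :=
    (Real.Gamma_pos_of_pos (by positivity)).ne'
  have hB : betaFn 1 b ≠ 0 := by
    unfold betaFn
    have h1 : (0:ℝ) < Real.Gamma 1 := Real.Gamma_pos_of_pos one_pos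
    have h2 : (0:ℝ) < Real.Gamma b := Real.Gamma_pos_of_pos hb
    have h3 : (0:ℝ) < Real.Gamma (1 + b) := Real.Gamma_pos_of_pos (by linarith)
    positivity
  have hc0 : (p.choose k : ℝ) ≠ 0 := by
    exact_mod_cast (Nat.choose_pos hkp).ne'
  -- Gamma recurrences
  have hG1 : Real.Gamma (b + (p : ℝ) - k) = x * Real.Gamma x := by
    have : b + (p : ℝ) - k = x + 1 := by rw [hxdef]; ring
    rw [this, Real.Gamma_add_one hx.ne']
  have hG2 : Real.Gamma (1 + ((k : ℝ) + 1)) = ((k : ℝ) + 1) * Real.Gamma ((k : ℝ) + 1) := by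
    have : (1 : ℝ) + ((k : ℝ) + 1) = ((k : ℝ) + 1) + 1 := by ring
    rw [this, Real.Gamma_add_one (by positivity)]
  have hG3 : (1 : ℝ) + (k : ℝ) = (k : ℝ) + 1 := by ring
  -- choose identity
  have hch : (p.choose (k + 1) : ℝ) * ((k : ℝ) + 1) = (p.choose k : ℝ) * ((p : ℝ) - k) := by
    have := Nat.add_one_mul_choose_eq p k
    have h2 : (p.choose (k+1)) * (k + 1) = p.choose k * (p - k) := Nat.choose_succ_right_eq p k
    have h3 : ((p - k : ℕ) : ℝ) = (p : ℝ) - k := by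
      rw [Nat.cast_sub hkp]
    calc (p.choose (k + 1) : ℝ) * ((k : ℝ) + 1)
        = ((p.choose (k+1) * (k+1) : ℕ) : ℝ) := by push_cast; ring
      _ = ((p.choose k * (p - k) : ℕ) : ℝ) := by rw [h2]
      _ = (p.choose k : ℝ) * ((p : ℝ) - k) := by push_cast [Nat.cast_sub hkp]; ring
  have hsum1 : 1 + ((k : ℝ) + 1) + (b + (p : ℝ) - ((k : ℝ) + 1)) = b + (p : ℝ) + 1 := by ring
  have hsum2 : 1 + (k : ℝ) + (b + (p : ℝ) - (k : ℝ)) = b + (p : ℝ) + 1 := by ring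
  have harg : b + (p : ℝ) - ((k : ℝ) + 1) = x := by rw [hxdef]; ring
  have harg2 : b + (p : ℝ) - (k : ℝ) = x + 1 := by rw [hxdef]; ring
  symm
  unfold betaFn
  have hB' : Real.Gamma 1 * Real.Gamma b / Real.Gamma (1 + b) ≠ 0 := by
    have h1 : (0:ℝ) < Real.Gamma 1 := Real.Gamma_pos_of_pos one_pos
    have h2 : (0:ℝ) < Real.Gamma b := Real.Gamma_pos_of_pos hb
    have h3 : (0:ℝ) < Real.Gamma (1 + b) := Real.Gamma_pos_of_pos (by linarith)
    positivity
  rw [hsum1, hsum2, harg, hG2, hG3, harg2, Real.Gamma_add_one hx.ne']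
  rw [mul_div_assoc, mul_div_assoc, div_div_div_cancel_right₀ hB']
  have hpx : (p : ℝ) + c = x := by rw [hxdef, hc]; ring
  rw [hpx]
  have hden : (p.choose k : ℝ) * (Real.Gamma ((k : ℝ) + 1) * (x * Real.Gamma x) /
      Real.Gamma (b + (p : ℝ) + 1)) ≠ 0 := by
    apply mul_ne_zero hc0
    apply div_ne_zero _ hΓs
    exact mul_ne_zero hΓk (mul_ne_zero hx.ne' hΓx)
  rw [← mul_div_assoc, div_eq_div_iff hden hx.ne']
  linear_combination (Real.Gamma ((k : ℝ) + 1) * Real.Gamma x * x / Real.Gamma (b + (p:ℝ) + 1)) * hch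
end

section
/- Fix a positive integer m and an integer k ≥ 0. Under the Beta-Binomial model-size prior with Beta(1, mp) hyperprior, i.e. P_p(k) = C(p,k) B(1+k, mp+p-k)/B(1, mp), the ratio P_p(k+1)/P_p(k) converges to 1/(m+1) as p → ∞. -/
open Filter

/-- Under a Beta(1, mp) hyperprior, the model-size ratio tends to 1/(m+1). -/
theorem stmt7 (m : ℕ) (hm : 1 ≤ m) (k : ℕ) :
    Tendsto (fun p : ℕ =>
        ((p.choose (k + 1) : ℝ) *
            betaFn (1 + ((k : ℝ) + 1)) ((m : ℝ) * p + (p : ℝ) - ((k : ℝ) + 1)) /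
            betaFn 1 ((m : ℝ) * p)) /
        ((p.choose k : ℝ) * betaFn (1 + (k : ℝ)) ((m : ℝ) * p + (p : ℝ) - (k : ℝ)) /
            betaFn 1 ((m : ℝ) * p)))
      atTop (nhds (1 / ((m : ℝ) + 1))) := by
  have key : ∀ᶠ p : ℕ in atTop,
      (((p : ℝ) - k) / ((m : ℝ) * p + p - k - 1)) =
      ((p.choose (k + 1) : ℝ) *
            betaFn (1 + ((k : ℝ) + 1)) ((m : ℝ) * p + (p : ℝ) - ((k : ℝ) + 1)) /
            betaFn 1 ((m : ℝ) * p)) /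
        ((p.choose k : ℝ) * betaFn (1 + (k : ℝ)) ((m : ℝ) * p + (p : ℝ) - (k : ℝ)) /
            betaFn 1 ((m : ℝ) * p)) := by
    filter_upwards [eventually_ge_atTop (k + 2)] with p hp
    have hpk : (k : ℝ) + 2 ≤ (p : ℝ) := by exact_mod_cast hp
    have hm1 : (1 : ℝ) ≤ (m : ℝ) := by exact_mod_cast hm
    have hmp : (p : ℝ) ≤ (m : ℝ) * p := by nlinarith [(by positivity : (0:ℝ) ≤ (p:ℝ))]
    have hd : (0 : ℝ) < (m : ℝ) * p + p - k - 1 := by nlinarith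
    have hmp0 : (0 : ℝ) < (m : ℝ) * p := by nlinarith
    -- Gamma positivity / nonvanishing facts
    have hg1 : (0 : ℝ) < Real.Gamma ((m : ℝ) * p + p - k - 1) :=
      Real.Gamma_pos_of_pos hd
    have hgS : (0 : ℝ) < Real.Gamma ((m : ℝ) * p + p + 1) :=
      Real.Gamma_pos_of_pos (by nlinarith)
    have hgB : (0 : ℝ) < Real.Gamma ((m : ℝ) * p) := Real.Gamma_pos_of_pos hmp0
    have hgB1 : (0 : ℝ) < Real.Gamma (1 + (m : ℝ) * p) :=
      Real.Gamma_pos_of_pos (by nlinarith)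
    have hgk0 : (0 : ℝ) < 1 + (k : ℝ) := by positivity
    have hgk : (0 : ℝ) < Real.Gamma (1 + (k : ℝ)) :=
      Real.Gamma_pos_of_pos hgk0
    -- rewrite Γ arguments
    have hrec : Real.Gamma ((m : ℝ) * p + (p : ℝ) - (k : ℝ)) =
        ((m : ℝ) * p + p - k - 1) * Real.Gamma ((m : ℝ) * p + p - k - 1) := by
      have h := Real.Gamma_add_one (ne_of_gt hd)
      calc Real.Gamma ((m : ℝ) * p + (p : ℝ) - (k : ℝ))
          = Real.Gamma (((m : ℝ) * p + p - k - 1) + 1) := congrArg Real.Gamma (by ring)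
        _ = ((m : ℝ) * p + p - k - 1) * Real.Gamma ((m : ℝ) * p + p - k - 1) := h
    have hargA : (m : ℝ) * p + (p : ℝ) - ((k : ℝ) + 1) = (m : ℝ) * p + p - k - 1 := by ring
    have hrecK : Real.Gamma (1 + ((k : ℝ) + 1)) = ((k : ℝ) + 1) * Real.Gamma (1 + (k : ℝ)) := by
      have h := Real.Gamma_add_one (ne_of_gt hgk0)
      calc Real.Gamma (1 + ((k : ℝ) + 1))
          = Real.Gamma ((1 + (k : ℝ)) + 1) := congrArg Real.Gamma (by ring)
        _ = (1 + (k : ℝ)) * Real.Gamma (1 + (k : ℝ)) := h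
        _ = ((k : ℝ) + 1) * Real.Gamma (1 + (k : ℝ)) := by ring
    have hsumA : (1 : ℝ) + ((k : ℝ) + 1) + ((m : ℝ) * p + (p : ℝ) - (k : ℝ) - 1) =
        (m : ℝ) * p + p + 1 := by ring
    have hsumB : (1 : ℝ) + (k : ℝ) + ((m : ℝ) * p + (p : ℝ) - (k : ℝ)) =
        (m : ℝ) * p + p + 1 := by ring
    -- choose identity
    have hchoose : ((p.choose (k + 1) : ℝ)) * ((k : ℝ) + 1) = (p.choose k : ℝ) * ((p : ℝ) - k) := by
      have h := Nat.choose_succ_right_eq p k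
      have hkp : k ≤ p := by omega
      have : ((p.choose (k + 1) * (k + 1) : ℕ) : ℝ) = ((p.choose k * (p - k) : ℕ) : ℝ) := by
        exact_mod_cast congrArg (Nat.cast (R := ℝ)) h
      push_cast [Nat.cast_sub hkp] at this
      linarith [this]
    have hchoosek : (0 : ℝ) < (p.choose k : ℝ) := by
      exact_mod_cast Nat.choose_pos (by omega : k ≤ p)
    have hA : ((m : ℝ) * p + p - k - 1) ≠ 0 := hd.ne'
    simp only [betaFn, hargA, hsumA, hsumB, hrec, hrecK, Real.Gamma_one, one_mul]
    field_simp
    rw [hchoose, show (p : ℝ) * ((m : ℝ) + 1) - k - 1 = (m : ℝ) * p + p - k - 1 by ring,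
      show (p : ℝ) * m = (m : ℝ) * p by ring]
    rw [mul_assoc, mul_assoc (_ + _ - _ - _), mul_div_mul_right _ _ (mul_ne_zero hg1.ne' hgB.ne')]
    ring
  refine Tendsto.congr' key ?_
  have hlim : Tendsto (fun p : ℕ => ((1 : ℝ) - (k : ℝ) / p) / (((m : ℝ) + 1) - ((k : ℝ) + 1) / p))
      atTop (nhds (1 / ((m : ℝ) + 1))) := by
    have h1 : Tendsto (fun p : ℕ => (k : ℝ) / p) atTop (nhds 0) :=
      tendsto_const_div_atTop_nhds_zero_nat _
    have h2 : Tendsto (fun p : ℕ => ((k : ℝ) + 1) / p) atTop (nhds 0) :=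
      tendsto_const_div_atTop_nhds_zero_nat _
    have h3 : Tendsto (fun p : ℕ => ((m : ℝ) + 1) - ((k : ℝ) + 1) / p) atTop
        (nhds ((m : ℝ) + 1)) := by
      simpa using (tendsto_const_nhds (x := ((m : ℝ) + 1))).sub h2
    have hne : ((m : ℝ) + 1) ≠ 0 := by positivity
    have h0 : Tendsto (fun p : ℕ => (1 : ℝ) - (k : ℝ) / p) atTop (nhds 1) := by
      simpa using (tendsto_const_nhds (x := (1 : ℝ))).sub h1
    have := h0.div h3 hne
    exact this
  refine Tendsto.congr' ?_ hlim
  filter_upwards [eventually_ge_atTop 1] with p hp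
  have hp0 : (0 : ℝ) < (p : ℝ) := by exact_mod_cast hp
  field_simp
  ring
end

section
/- Fix v > 1 and an integer k ≥ 0. Under the Beta-Binomial model-size prior with Beta(1, p^v) hyperprior, i.e. P_p(k) = C(p,k) B(1+k, p^v + p - k)/B(1, p^v), the quantity p^{v-1} · P_p(k+1)/P_p(k) converges to 1 as p → ∞; equivalently, P_p(k+1)/P_p(k) is asymptotic to p^{1-v}. -/
open Filter

lemma betaFn_pos {a b : ℝ} (ha : 0 < a) (hb : 0 < b) : 0 < betaFn a b := by
  unfold betaFn
  exact div_pos (mul_pos (Real.Gamma_pos_of_pos ha) (Real.Gamma_pos_of_pos hb))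
    (Real.Gamma_pos_of_pos (by linarith))

lemma beta_step {a b : ℝ} (ha : 0 < a) (hb : 1 < b) :
    betaFn (a + 1) (b - 1) = betaFn a b * a / (b - 1) := by
  unfold betaFn
  have h1 : Real.Gamma (a + 1) = a * Real.Gamma a := Real.Gamma_add_one (by positivity)
  have h2 : Real.Gamma b = (b - 1) * Real.Gamma (b - 1) := by
    have := Real.Gamma_add_one (show b - 1 ≠ 0 by linarith)
    rw [show b - 1 + 1 = b by ring] at this
    exact this
  have h3 : a + 1 + (b - 1) = a + b := by ring
  rw [h1, h2, h3]
  have hΓ : Real.Gamma (a + b) ≠ 0 := ne_of_gt (Real.Gamma_pos_of_pos (by linarith))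
  have hb1 : b - 1 ≠ 0 := by linarith
  field_simp

/-- Under a Beta(1, p^v) hyperprior with v > 1, the model-size ratio is asymptotic to p^{1-v}. -/
theorem stmt8 (v : ℝ) (hv : 1 < v) (k : ℕ) :
    Tendsto (fun p : ℕ =>
        (p : ℝ) ^ (v - 1) *
          (((p.choose (k + 1) : ℝ) *
              betaFn (1 + ((k : ℝ) + 1)) ((p : ℝ) ^ v + (p : ℝ) - ((k : ℝ) + 1)) /
              betaFn 1 ((p : ℝ) ^ v)) /
            ((p.choose k : ℝ) * betaFn (1 + (k : ℝ)) ((p : ℝ) ^ v + (p : ℝ) - (k : ℝ)) /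
              betaFn 1 ((p : ℝ) ^ v))))
      atTop (nhds 1) := by
  have hx : Tendsto (fun p : ℕ => (p : ℝ)) atTop atTop := tendsto_natCast_atTop_atTop
  have hmain : Tendsto (fun p : ℕ =>
      (p : ℝ) ^ (v - 1) * (((p : ℝ) - (k : ℝ)) / ((p : ℝ) ^ v + (p : ℝ) - (k : ℝ) - 1)))
      atTop (nhds 1) := by
    have hnum : Tendsto (fun p : ℕ => 1 - (k : ℝ) / (p : ℝ)) atTop (nhds 1) := by
      have : Tendsto (fun p : ℕ => (k : ℝ) / (p : ℝ)) atTop (nhds 0) :=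
        (tendsto_const_div_atTop_nhds_zero_nat (k : ℝ)).congr (fun p => by norm_num)
      simpa using (tendsto_const_nhds (x := (1:ℝ))).sub this
    have hden : Tendsto (fun p : ℕ =>
        1 + (p : ℝ) ^ (1 - v) - ((k : ℝ) + 1) * (p : ℝ) ^ (-v)) atTop (nhds 1) := by
      have h1 : Tendsto (fun p : ℕ => (p : ℝ) ^ (1 - v)) atTop (nhds 0) := by
        have := (tendsto_rpow_neg_atTop (y := v - 1) (by linarith)).comp hx
        simpa [Function.comp_def, neg_sub] using this
      have h2 : Tendsto (fun p : ℕ => ((k : ℝ) + 1) * (p : ℝ) ^ (-v)) atTop (nhds 0) := by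
        have := (tendsto_rpow_neg_atTop (y := v) (by linarith)).comp hx
        simpa using this.const_mul ((k : ℝ) + 1)
      have := ((tendsto_const_nhds (x := (1:ℝ))).add h1).sub h2
      simpa using this
    have hq := hnum.div hden one_ne_zero
    rw [show (1 : ℝ) / 1 = 1 by norm_num] at hq
    refine hq.congr' ?_
    filter_upwards [eventually_ge_atTop (k + 1)] with p hp
    have hp0 : (0 : ℝ) < (p : ℝ) := by
      have : (1 : ℕ) ≤ p := le_trans (Nat.le_add_left 1 k) hp
      exact_mod_cast Nat.lt_of_lt_of_le Nat.zero_lt_one this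
    have hpk : ((k : ℝ) + 1) ≤ (p : ℝ) := by exact_mod_cast hp
    have hp1 : (1 : ℝ) ≤ (p : ℝ) := by linarith [Nat.cast_nonneg (α := ℝ) k]
    have hpv1 : (1 : ℝ) ≤ (p : ℝ) ^ v := Real.one_le_rpow hp1 (by linarith)
    have hX : (0 : ℝ) < (p : ℝ) ^ v + (p : ℝ) - (k : ℝ) - 1 := by linarith
    simp only [Pi.div_apply]
    have key1 : 1 - (k : ℝ) / (p : ℝ) = ((p : ℝ) - k) / (p : ℝ) := by field_simp
    have key2 : 1 + (p : ℝ) ^ (1 - v) - ((k : ℝ) + 1) * (p : ℝ) ^ (-v)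
        = ((p : ℝ) ^ v + (p : ℝ) - (k : ℝ) - 1) / (p : ℝ) ^ v := by
      rw [Real.rpow_sub hp0, Real.rpow_neg (le_of_lt hp0), Real.rpow_one]
      field_simp
      ring
    rw [key1, key2, show (p : ℝ) ^ (v - 1) = (p : ℝ) ^ v / (p : ℝ) by
      rw [Real.rpow_sub hp0, Real.rpow_one]]
    field_simp
  refine hmain.congr' ?_
  filter_upwards [eventually_ge_atTop (k + 1)] with p hp
  have hkp : k ≤ p := le_trans (Nat.le_succ k) hp
  have hp0 : (0 : ℝ) < (p : ℝ) := by
    have : (1 : ℕ) ≤ p := le_trans (Nat.le_add_left 1 k) hp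
    exact_mod_cast Nat.lt_of_lt_of_le Nat.zero_lt_one this
  have hpk : ((k : ℝ) + 1) ≤ (p : ℝ) := by exact_mod_cast hp
  have hpv1 : (1 : ℝ) ≤ (p : ℝ) ^ v := Real.one_le_rpow (by linarith [Nat.cast_nonneg (α := ℝ) k]) (by linarith)
  set x : ℝ := (p : ℝ)
  -- beta step
  have hb : 1 < x ^ v + x - (k : ℝ) := by linarith
  have hstep := beta_step (a := 1 + (k : ℝ)) (b := x ^ v + x - (k : ℝ))
    (by positivity) hb
  have e1 : (1 + (k : ℝ)) + 1 = 1 + ((k : ℝ) + 1) := by ring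
  have e2 : (x ^ v + x - (k : ℝ)) - 1 = x ^ v + x - ((k : ℝ) + 1) := by ring
  rw [e1, e2] at hstep
  -- choose identity
  have hch : (p.choose (k + 1) : ℝ) * ((k : ℝ) + 1) = (p.choose k : ℝ) * (x - (k : ℝ)) := by
    have := Nat.choose_succ_right_eq p k
    have hcast : ((p.choose (k + 1) * (k + 1) : ℕ) : ℝ) = ((p.choose k * (p - k) : ℕ) : ℝ) := by
      exact_mod_cast congrArg (Nat.cast : ℕ → ℝ) this
    push_cast [Nat.cast_sub hkp] at hcast
    simpa using hcast
  have hC0 : (0 : ℝ) < (p.choose k : ℝ) := by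
    exact_mod_cast Nat.choose_pos hkp
  have hB : (0 : ℝ) < betaFn (1 + (k : ℝ)) (x ^ v + x - (k : ℝ)) :=
    betaFn_pos (by positivity) (by linarith)
  have hB0 : (0 : ℝ) < betaFn 1 (x ^ v) := betaFn_pos one_pos (by linarith)
  have hNk : (0 : ℝ) < x ^ v + x - ((k : ℝ) + 1) := by linarith
  rw [hstep]
  have hch' : (p.choose (k + 1) : ℝ) = (p.choose k : ℝ) * (x - (k : ℝ)) / ((k : ℝ) + 1) := by
    field_simp at hch ⊢
    linarith [hch]
  rw [hch']
  have hk1 : ((k : ℝ) + 1) ≠ 0 := by positivity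
  rw [show x ^ v + x - (k : ℝ) - 1 = x ^ v + x - ((k : ℝ) + 1) from e2]
  set Y : ℝ := x ^ v + x - ((k : ℝ) + 1) with hY
  set c : ℝ := (p.choose k : ℝ) with hc
  set b : ℝ := betaFn (1 + (k : ℝ)) (x ^ v + x - (k : ℝ)) with hbb
  set b0 : ℝ := betaFn 1 (x ^ v) with hb0
  have hYne : Y ≠ 0 := ne_of_gt hNk
  have hcne : c ≠ 0 := ne_of_gt hC0
  have hbne : b ≠ 0 := ne_of_gt hB
  have hb0ne : b0 ≠ 0 := ne_of_gt hB0
  congr 1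
  field_simp
  ring
end
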